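/- Let y : ℝ³ × ℝ → ℝ³ be twice continuously differentiable, let ∇y denote the spatial Jacobian and cof M := (adjugate M)ᵀ the cofactor matrix, and let ε denote the Levi–Civita symbol on {1,2,3}. Then at every point and for all indices i, α ∈ {1,2,3}: ∂/∂t [(cof ∇y)_{i α}] = Σ_{k,l,m,n=1}^{3} ε_{α k l} ∂/∂x_k [ ε_{i m n} (∂y_m/∂t)(∂y_n/∂x_l) ], i.e. ∂ₜ cof ∇y = ∇ × (∂ₜ y × ∇y) in the paper's matrix curl and cross-product conventions. -/

import Mathlib

open Matrix
open scoped BigOperators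

/-- The Levi–Civita symbol on `{1,2,3}` (zero-based indices): `eps i j k` is
the sign of the permutation `(i,j,k)` of `(0,1,2)` and `0` otherwise. -/
noncomputable def eps (i j k : Fin 3) : ℝ :=
  (((j.val : ℝ) - (i.val : ℝ)) * ((k.val : ℝ) - (i.val : ℝ))
    * ((k.val : ℝ) - (j.val : ℝ))) / 2

/-- **Qin's conservation law for the cofactor matrix.**
Let `y : ℝ³ × ℝ → ℝ³` be `C²`, `J z t` its spatial Jacobian, `v z t = ∂ₜ y`,
and `cof M = (adjugate M)ᵀ`. Then, in the paper's matrix curl and vector-matrix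
cross-product conventions, `∂ₜ cof ∇y = ∇ × (∂ₜ y × ∇y)`:
`∂ₜ (cof ∇y)_{iα} = Σ_{k,l,m,n} ε_{αkl} ∂/∂x_k [ ε_{imn} (∂ₜy_m)(∂y_n/∂x_l) ]`. -/
lemma eps_curl_zero (α : Fin 3) (T : Fin 3 → Fin 3 → ℝ) (hT : ∀ k l, T k l = T l k) :
    ∑ k, ∑ l, eps α k l * T k l = 0 := by
  fin_cases α <;>
    · simp only [Fin.sum_univ_three, eps]
      norm_num
      linarith [hT 0 1, hT 0 2, hT 1 2]

lemma cof3 (M : Matrix (Fin 3) (Fin 3) ℝ) (i α : Fin 3) :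
    M.adjugate α i = (1/2 : ℝ) * ∑ j, ∑ k, ∑ β, ∑ γ,
      eps i j k * eps α β γ * (M j β * M k γ) := by
  fin_cases i <;> fin_cases α <;>
    (simp only [Matrix.adjugate_fin_three, Fin.sum_univ_three, eps, Matrix.cons_val',
       Matrix.cons_val_zero, Matrix.cons_val_one, Matrix.head_cons, Matrix.head_fin_const,
       Matrix.cons_val_fin_one, Matrix.empty_val']; norm_num; ring)

set_option maxHeartbeats 1000000 in
lemma alg2 (i α : Fin 3) (S A : Fin 3 → Fin 3 → ℝ) :
    (1/2 : ℝ) * ∑ j, ∑ k, ∑ β, ∑ γ,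
        eps i j k * eps α β γ * (S β j * A k γ + A j β * S γ k)
      = ∑ k, ∑ l, ∑ m, ∑ n, eps α k l * (eps i m n * (S k m * A n l)) := by
  fin_cases i <;> fin_cases α <;>
    (simp only [Fin.sum_univ_three, eps]; norm_num; ring)

theorem cofactor_conservation_law
    (y : (Fin 3 → ℝ) → ℝ → (Fin 3 → ℝ))
    (hy : ContDiff ℝ 2 (fun p : (Fin 3 → ℝ) × ℝ => y p.1 p.2))
    (J : (Fin 3 → ℝ) → ℝ → Matrix (Fin 3) (Fin 3) ℝ)
    (hJ : ∀ z t i α, J z t i α = fderiv ℝ (fun w => y w t) z (Pi.single α 1) i)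
    (v : (Fin 3 → ℝ) → ℝ → (Fin 3 → ℝ))
    (hv : ∀ z t i, v z t i = deriv (fun s => y z s i) t)
    (x : Fin 3 → ℝ) (t : ℝ) (i α : Fin 3) :
    deriv (fun s => ((J x s).adjugate)ᵀ i α) t
      = ∑ k, ∑ l, ∑ m, ∑ n',
          eps α k l *
            fderiv ℝ (fun z => eps i m n' * v z t m * J z t n' l) x
              (Pi.single k 1) := by
  set Y : (Fin 3 → ℝ) × ℝ → (Fin 3 → ℝ) := fun p => y p.1 p.2 with hYdef
  have hYd : Differentiable ℝ Y := hy.differentiable (by norm_num)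
  set G := fderiv ℝ Y with hGdef
  have hG1 : ContDiff ℝ 1 G := hy.fderiv_right (by norm_num)
  set B := fderiv ℝ G (x, t) with hBdef
  have hB : HasFDerivAt G B (x, t) := ((hG1.differentiable (by norm_num)) (x, t)).hasFDerivAt
  have hsym : ∀ u w, B u w = B w u :=
    second_derivative_symmetric (fun p => (hYd p).hasFDerivAt) hB
  have hL : ∀ (w : (Fin 3 → ℝ) × ℝ) (n : Fin 3),
      HasFDerivAt (fun p : (Fin 3 → ℝ) × ℝ => G p w n)
        (((ContinuousLinearMap.proj n).comp
          (ContinuousLinearMap.apply ℝ (Fin 3 → ℝ) w)).comp B) (x, t) := by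
    intro w n
    exact (((ContinuousLinearMap.proj n).comp
      (ContinuousLinearMap.apply ℝ (Fin 3 → ℝ) w)).hasFDerivAt.comp (x, t) hB)
  have hSz : ∀ (w : (Fin 3 → ℝ) × ℝ) (n : Fin 3),
      HasFDerivAt (fun z => G (z, t) w n)
        ((((ContinuousLinearMap.proj n).comp
          (ContinuousLinearMap.apply ℝ (Fin 3 → ℝ) w)).comp B).comp
            (ContinuousLinearMap.inl ℝ (Fin 3 → ℝ) ℝ)) x := by
    intro w n
    exact (hL w n).comp x (hasFDerivAt_prodMk_left (𝕜 := ℝ) x t)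
  have hc : ∀ (z : Fin 3 → ℝ) (s : ℝ), HasDerivAt (fun s' : ℝ => ((z, s') : (Fin 3 → ℝ) × ℝ))
      ((0 : Fin 3 → ℝ), (1 : ℝ)) s := fun z s => (hasDerivAt_const s z).prodMk (hasDerivAt_id s)
  have hSt : ∀ (w : (Fin 3 → ℝ) × ℝ) (n : Fin 3),
      HasDerivAt (fun s => G (x, s) w n) (B ((0 : Fin 3 → ℝ), (1 : ℝ)) w n) t := by
    intro w n
    simpa [Function.comp_def] using (hL w n).comp_hasDerivAt t (hc x t)
  have hJG : ∀ z s n l, J z s n l = G (z, s) (Pi.single l 1, (0 : ℝ)) n := by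
    intro z s n l
    have h1 : HasFDerivAt (fun w => y w s)
        ((G (z, s)).comp (ContinuousLinearMap.inl ℝ (Fin 3 → ℝ) ℝ)) z :=
      by have := (hYd (z, s)).hasFDerivAt.comp z (hasFDerivAt_prodMk_left (𝕜 := ℝ) z s); exact this
    rw [hJ, h1.fderiv]; simp
  have hvG : ∀ z s m, v z s m = G (z, s) ((0 : Fin 3 → ℝ), (1 : ℝ)) m := by
    intro z s m
    have h3 : HasDerivAt (fun s' => Y (z, s')) (G (z, s) ((0 : Fin 3 → ℝ), (1 : ℝ))) s :=
      (hYd (z, s)).hasFDerivAt.comp_hasDerivAt s (hc z s)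
    have h4 : HasDerivAt (fun s' => y z s' m) (G (z, s) ((0 : Fin 3 → ℝ), (1 : ℝ)) m) s := by
      simpa [Function.comp_def] using (ContinuousLinearMap.proj m :
        (Fin 3 → ℝ) →L[ℝ] ℝ).hasFDerivAt.comp_hasDerivAt s h3
    rw [hv, h4.deriv]
  -- abbreviations
  set S : Fin 3 → Fin 3 → ℝ :=
    fun b j => B ((0 : Fin 3 → ℝ), (1 : ℝ)) (Pi.single b 1, (0 : ℝ)) j with hSdef
  set T : Fin 3 → Fin 3 → Fin 3 → ℝ :=
    fun k l n => B (Pi.single k 1, (0 : ℝ)) (Pi.single l 1, (0 : ℝ)) n with hTdef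
  set A : Fin 3 → Fin 3 → ℝ := fun a b => J x t a b with hAdef
  set V : Fin 3 → ℝ := fun m => v x t m with hVdef
  -- time derivative of matrix entries
  have hA : ∀ n l, HasDerivAt (fun s => J x s n l) (S l n) t := by
    intro n l
    have heq : (fun s => J x s n l) = fun s => G (x, s) (Pi.single l 1, (0 : ℝ)) n :=
      funext fun s => hJG x s n l
    rw [heq]; exact hSt _ n
  -- LHS computation
  have hD : HasDerivAt
      (fun s => (1/2 : ℝ) * ∑ j, ∑ k, ∑ β, ∑ γ,
        eps i j k * eps α β γ * (J x s j β * J x s k γ))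
      ((1/2 : ℝ) * ∑ j, ∑ k, ∑ β, ∑ γ,
        eps i j k * eps α β γ * (S β j * A k γ + A j β * S γ k)) t := by
    refine HasDerivAt.const_mul _ ?_
    refine HasDerivAt.fun_sum fun j _ => ?_
    refine HasDerivAt.fun_sum fun k _ => ?_
    refine HasDerivAt.fun_sum fun β _ => ?_
    refine HasDerivAt.fun_sum fun γ _ => ?_
    exact ((hA j β).mul (hA k γ)).const_mul _
  have hfun : (fun s => ((J x s).adjugate)ᵀ i α)
      = fun s => (1/2 : ℝ) * ∑ j, ∑ k, ∑ β, ∑ γ,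
        eps i j k * eps α β γ * (J x s j β * J x s k γ) := by
    funext s
    rw [Matrix.transpose_apply]
    exact cof3 (J x s) i α
  have hLHS : deriv (fun s => ((J x s).adjugate)ᵀ i α) t
      = (1/2 : ℝ) * ∑ j, ∑ k, ∑ β, ∑ γ,
        eps i j k * eps α β γ * (S β j * A k γ + A j β * S γ k) := by
    rw [hfun, hD.deriv]
  -- RHS term computation
  have hterm : ∀ k l m n, fderiv ℝ (fun z => eps i m n * v z t m * J z t n l) x (Pi.single k 1)
      = eps i m n * (S k m * A n l) + eps i m n * (V m * T k l n) := by
    intro k l m n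
    have h1 : HasFDerivAt (fun z => v z t m)
        ((((ContinuousLinearMap.proj m).comp
          (ContinuousLinearMap.apply ℝ (Fin 3 → ℝ) ((0 : Fin 3 → ℝ), (1 : ℝ)))).comp B).comp
            (ContinuousLinearMap.inl ℝ (Fin 3 → ℝ) ℝ)) x := by
      have heq : (fun z => v z t m) = fun z => G (z, t) ((0 : Fin 3 → ℝ), (1 : ℝ)) m :=
        funext fun z => hvG z t m
      rw [heq]; exact hSz _ m
    have h2 : HasFDerivAt (fun z => J z t n l)
        ((((ContinuousLinearMap.proj n).comp
          (ContinuousLinearMap.apply ℝ (Fin 3 → ℝ) (Pi.single l 1, (0 : ℝ)))).comp B).comp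
            (ContinuousLinearMap.inl ℝ (Fin 3 → ℝ) ℝ)) x := by
      have heq : (fun z => J z t n l) = fun z => G (z, t) (Pi.single l 1, (0 : ℝ)) n :=
        funext fun z => hJG z t n l
      rw [heq]; exact hSz _ n
    have h3 := (h1.const_mul (eps i m n)).mul h2
    rw [show (fun z => eps i m n * v z t m * J z t n l)
      = ((fun y => eps i m n * v y t m) * fun z => J z t n l) from rfl, h3.fderiv]
    have hSsym : B (Pi.single k 1, (0 : ℝ)) ((0 : Fin 3 → ℝ), (1 : ℝ)) m = S k m := by
      rw [hSdef]; rw [hsym]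
    simp only [ContinuousLinearMap.add_apply, ContinuousLinearMap.smul_apply,
      ContinuousLinearMap.comp_apply, ContinuousLinearMap.inl_apply,
      ContinuousLinearMap.apply_apply, ContinuousLinearMap.proj_apply, smul_eq_mul]
    rw [hSsym]
    ring
  rw [hLHS]
  calc (1/2 : ℝ) * ∑ j, ∑ k, ∑ β, ∑ γ,
        eps i j k * eps α β γ * (S β j * A k γ + A j β * S γ k)
      = ∑ k, ∑ l, ∑ m, ∑ n, eps α k l * (eps i m n * (S k m * A n l)) := alg2 i α S A
    _ = ∑ k, ∑ l, ∑ m, ∑ n',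
          eps α k l * fderiv ℝ (fun z => eps i m n' * v z t m * J z t n' l) x
            (Pi.single k 1) := by
        have hzero : ∑ k, ∑ l, ∑ m, ∑ n,
            eps α k l * (eps i m n * (V m * T k l n)) = 0 := by
          have := eps_curl_zero α
            (fun k l => ∑ m, ∑ n, eps i m n * (V m * T k l n))
            (fun k l => by
              refine Finset.sum_congr rfl fun m _ => Finset.sum_congr rfl fun n _ => ?_
              have hTs : T k l n = T l k n := congrFun (hsym _ _) n
              rw [hTs])
          simpa only [Finset.mul_sum] using this
        calc ∑ k, ∑ l, ∑ m, ∑ n, eps α k l * (eps i m n * (S k m * A n l))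
            = ∑ k, ∑ l, ∑ m, ∑ n,
              (eps α k l * (eps i m n * (S k m * A n l))
                + eps α k l * (eps i m n * (V m * T k l n))) := by
              rw [show (∑ k, ∑ l, ∑ m, ∑ n,
                (eps α k l * (eps i m n * (S k m * A n l))
                  + eps α k l * (eps i m n * (V m * T k l n))))
                = (∑ k, ∑ l, ∑ m, ∑ n, eps α k l * (eps i m n * (S k m * A n l)))
                  + ∑ k, ∑ l, ∑ m, ∑ n, eps α k l * (eps i m n * (V m * T k l n)) by
                simp only [Finset.sum_add_distrib]]
              rw [hzero, add_zero]
          _ = ∑ k, ∑ l, ∑ m, ∑ n',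
              eps α k l * fderiv ℝ (fun z => eps i m n' * v z t m * J z t n' l) x
                (Pi.single k 1) := by
              refine Finset.sum_congr rfl fun k _ => Finset.sum_congr rfl fun l _ =>
                Finset.sum_congr rfl fun m _ => Finset.sum_congr rfl fun n _ => ?_
              rw [hterm k l m n, mul_add]
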